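/- A deterministic weak Büchi automaton can be complemented by swapping accepting and non-accepting states: if A is a complete deterministic Büchi automaton in which every strongly connected component consists entirely of accepting states or entirely of non-accepting states, then the automaton A' obtained by complementing the set of accepting states satisfies L(A') = Σ^ω \ L(A). -/
import Mathlib


/-- The unique run of a complete deterministic automaton on an ω-word. -/
def detRun {α σ : Type*} (step : σ → α → σ) (q0 : σ) (w : ℕ → α) : ℕ → σ
  | 0 => q0
  | n + 1 => step (detRun step q0 w n) (w n)

/-- Edge relation of the transition graph of a deterministic automaton. -/
def dedge {α σ : Type*} (step : σ → α → σ) (q q' : σ) : Prop := ∃ a, step q a = q'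

lemma detRun_reach {α σ : Type*} (step : σ → α → σ) (q0 : σ) (w : ℕ → α) :
    ∀ m n, m ≤ n → Relation.ReflTransGen (dedge step)
      (detRun step q0 w m) (detRun step q0 w n) := by
  intro m n hmn
  induction n with
  | zero => cases Nat.le_zero.mp hmn; exact Relation.ReflTransGen.refl
  | succ k ih =>
    rcases Nat.lt_or_ge m (k+1) with h | h
    · exact (ih (Nat.lt_succ_iff.mp h)).tail ⟨w k, rfl⟩
    · have : m = k + 1 := le_antisymm hmn h
      subst this; exact Relation.ReflTransGen.refl

lemma pigeon {σ : Type*} [Fintype σ] (f : ℕ → σ) (A : Set ℕ)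
    (hA : ∀ N, ∃ n ≥ N, n ∈ A) : ∃ q, ∀ N, ∃ n ≥ N, n ∈ A ∧ f n = q := by
  by_contra h
  push_neg at h
  choose N hN using h
  classical
  set M := Finset.univ.sup (fun q => N q) with hM
  obtain ⟨n, hn, hnA⟩ := hA M
  exact hN (f n) n (le_trans (Finset.le_sup (Finset.mem_univ (f n))) hn) hnA rfl

/-- A complete deterministic weak Büchi automaton is complemented by
complementing its set of accepting states. -/
theorem stmt_13 {α σ : Type*} [Fintype σ] (step : σ → α → σ) (q0 : σ) (F : Set σ)
    (hweak : ∀ q q', Relation.ReflTransGen (dedge step) q q' →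
      Relation.ReflTransGen (dedge step) q' q → (q ∈ F ↔ q' ∈ F)) :
    ∀ w : ℕ → α,
      (∀ N, ∃ n ≥ N, detRun step q0 w n ∈ Fᶜ)
        ↔ ¬ (∀ N, ∃ n ≥ N, detRun step q0 w n ∈ F) := by
  intro w
  constructor
  · intro hc hF
    obtain ⟨q, hq⟩ := pigeon (detRun step q0 w) {n | detRun step q0 w n ∈ Fᶜ} hc
    obtain ⟨q', hq'⟩ := pigeon (detRun step q0 w) {n | detRun step q0 w n ∈ F} hF
    obtain ⟨m, -, hmF, hmq⟩ := hq 0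
    obtain ⟨n, hn, hnF, hnq⟩ := hq' m
    obtain ⟨k, hk, hkF, hkq⟩ := hq n
    have r1 : Relation.ReflTransGen (dedge step) q q' := by
      rw [← hmq, ← hnq]; exact detRun_reach step q0 w m n hn
    have r2 : Relation.ReflTransGen (dedge step) q' q := by
      rw [← hnq, ← hkq]; exact detRun_reach step q0 w n k hk
    have := hweak q q' r1 r2
    simp only [Set.mem_setOf_eq] at hmF hnF
    rw [hmq] at hmF
    rw [hnq] at hnF
    exact hmF (this.mpr hnF)
  · intro hF N
    push_neg at hF
    obtain ⟨M, hM⟩ := hF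
    exact ⟨max N M, le_max_left _ _, hM _ (le_max_right _ _)⟩
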